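/- For every hash sequence of n cars on m places with 1 ≤ n < m, the visit counts satisfy the cyclic recursion H_{k+1} = Y_{k+1} + (H_k − 1)_+ for every k ∈ {1,…,m}, with the cyclic convention that the equation for k = m reads H_1 = Y_1 + (H_m − 1)_+, where x_+ = max(x,0). -/

import Mathlib

open MeasureTheory Filter
open scoped BigOperators

attribute [local instance] Classical.propDecidable

namespace Parking

variable {m : ℕ}

/-- Final parking spot of a car whose first try is place `s`, given the set `occ`
of currently occupied places (places are cyclic, i.e. elements of `ZMod m`). -/
noncomputable def spot (occ : Finset (ZMod m)) (s : ZMod m) : ZMod m :=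
  if h : ∃ t : ℕ, s + (t : ZMod m) ∉ occ then s + ((Nat.find h : ℕ) : ZMod m) else s

/-- Set of occupied places after the first `k` cars of the hash sequence `p` have parked. -/
noncomputable def occs (p : ℕ → ZMod m) : ℕ → Finset (ZMod m)
  | 0 => ∅
  | k + 1 => insert (spot (occs p k) (p k)) (occs p k)

/-- Number of consecutive occupied places starting at `x` (0 if `x` is empty). -/
noncomputable def runLen (occ : Finset (ZMod m)) (x : ZMod m) : ℕ :=
  if h : ∃ t : ℕ, x + (t : ZMod m) ∉ occ then Nat.find h else 0

/-- First place of the block of consecutive occupied places containing `x`. -/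
noncomputable def blockStart (occ : Finset (ZMod m)) (x : ZMod m) : ZMod m :=
  if h : ∃ t : ℕ, x - ((t : ZMod m) + 1) ∉ occ then x - ((Nat.find h : ℕ) : ZMod m) else x

/-- Starting places of the blocks of consecutive occupied places. -/
noncomputable def blockStarts (occ : Finset (ZMod m)) : Finset (ZMod m) :=
  occ.filter (fun x => x - 1 ∉ occ)

/-- The multiset of sizes of the blocks of consecutive occupied places. -/
noncomputable def blockSizes (occ : Finset (ZMod m)) : Multiset ℕ :=
  (blockStarts occ).val.map (runLen occ)

/-- `B n p k` : size of the `k`-th largest block (1-indexed, `0` if there are fewer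
than `k` blocks) once the `n` first cars of the hash sequence `p` have parked. -/
noncomputable def B (n : ℕ) (p : ℕ → ZMod m) (k : ℕ) : ℕ :=
  ((Multiset.sort (blockSizes (occs p n)) (· ≤ ·)).reverse).getD (k - 1) 0

/-- `R n p k` : size of the `k`-th block (1-indexed, `0` if there are fewer than `k`
blocks), blocks being sorted by increasing date of birth (increasing order of the first
arrival of a car of the block), once the `n` first cars of `p` have parked. -/
noncomputable def R (n : ℕ) (p : ℕ → ZMod m) (k : ℕ) : ℕ :=
  (((((List.range n).map
        (fun i => blockStart (occs p n) (spot (occs p i) (p i)))).reverse.dedup).reverse).map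
      (runLen (occs p n))).getD (k - 1) 0

/-- Number of places tried by car `i` beyond its first try. -/
noncomputable def offs (p : ℕ → ZMod m) (i : ℕ) : ℕ :=
  if h : ∃ t : ℕ, p i + (t : ZMod m) ∉ occs p i then Nat.find h else 0

/-- `H n p y` : number of cars among the `n` first cars of `p` that tried place `y`,
successfully or not. -/
noncomputable def H (n : ℕ) (p : ℕ → ZMod m) (y : ZMod m) : ℕ :=
  ((Finset.range n).filter (fun i => ∃ t : ℕ, t ≤ offs p i ∧ p i + (t : ZMod m) = y)).card

/-- `Y n p k` : number of cars whose first try is place `k` (periodic in `k`). -/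
noncomputable def Y (n : ℕ) (p : ℕ → ZMod m) (k : ℤ) : ℕ :=
  ((Finset.range n).filter (fun i => p i = (k : ZMod m))).card

/-- `A n p k = Y₁ + ⋯ + Y_k - k n / m`. -/
noncomputable def A (n : ℕ) (p : ℕ → ZMod m) (k : ℕ) : ℝ :=
  (∑ j ∈ Finset.range k, (Y n p (j + 1) : ℝ)) - (k : ℝ) * n / m

/-- `V n p` : the smallest `j ∈ {1, …, m}` at which `A` attains its minimum over `{1, …, m}`. -/
noncomputable def V (n : ℕ) (p : ℕ → ZMod m) : ℕ :=
  sInf {j | 1 ≤ j ∧ j ≤ m ∧ ∀ i, 1 ≤ i → i ≤ m → A n p j ≤ A n p i}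

/-- `C n p k = Y₁ + ⋯ + Y_k - k` for `0 ≤ k ≤ m`, extended to `ℤ` by `C (k + m) = C k - ℓ`. -/
noncomputable def C (n : ℕ) (p : ℕ → ZMod m) (k : ℤ) : ℤ :=
  ((∑ j ∈ Finset.range (k.emod m).toNat, (Y n p (j + 1) : ℤ)) - ((k.emod m).toNat : ℤ))
    - k.ediv m * ((m : ℤ) - (n : ℤ))

/-- Extension of a hash sequence `Fin n → Fin m` to a map `ℕ → ZMod m`. -/
def ext (m n : ℕ) (p : Fin n → Fin m) : ℕ → ZMod m :=
  fun i => if h : i < n then (((p ⟨i, h⟩) : ℕ) : ZMod m) else 0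

/-- Probability of an event under the uniform distribution on the `m ^ n` hash sequences. -/
noncomputable def parkProb (m n : ℕ) (ev : (ℕ → ZMod m) → Prop) : ℝ :=
  ((Finset.univ.filter (fun p : Fin n → Fin m => ev (ext m n p))).card : ℝ) / (m : ℝ) ^ n

/-- Expectation of a random variable under the uniform distribution on hash sequences. -/
noncomputable def parkExp (m n : ℕ) (X : (ℕ → ZMod m) → ℝ) : ℝ :=
  (∑ p : Fin n → Fin m, X (ext m n p)) / (m : ℝ) ^ n

/-- `φ(M,N,K) = binom(N−1,K−1) (K+1)^{K−1} M (M−K−1)^{N−K−1} (M−N−1) / M^N`. -/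
noncomputable def phi (M N K : ℕ) : ℝ :=
  (Nat.choose (N - 1) (K - 1) : ℝ) * ((K : ℝ) + 1) ^ (K - 1) * (M : ℝ)
      * ((M - K - 1 : ℕ) : ℝ) ^ (N - K - 1) * ((M - N - 1 : ℕ) : ℝ) / (M : ℝ) ^ N

/-- The density `f(λ,x) = (λ/√(2π)) x^{−1/2} (1−x)^{−3/2} exp(−λ²x/(2(1−x)))` on `(0,1)`. -/
noncomputable def fdens (l x : ℝ) : ℝ :=
  if 0 < x ∧ x < 1 then
    l / Real.sqrt (2 * Real.pi) * x ^ (-(1 : ℝ) / 2) * (1 - x) ^ (-(3 : ℝ) / 2)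
      * Real.exp (-(l ^ 2 * x) / (2 * (1 - x)))
  else 0


section Aux

variable {p : ℕ → ZMod m}

lemma occs_card (p : ℕ → ZMod m) (i : ℕ) : (occs p i).card ≤ i := by
  induction i with
  | zero => simp [occs]
  | succ i ih =>
    refine (Finset.card_insert_le _ _).trans ?_
    omega

lemma occs_subset_succ (p : ℕ → ZMod m) (i : ℕ) : occs p i ⊆ occs p (i + 1) :=
  Finset.subset_insert _ _

lemma occs_mono (p : ℕ → ZMod m) {i j : ℕ} (h : i ≤ j) : occs p i ⊆ occs p j := by
  induction j with
  | zero => rw [Nat.le_zero.mp h]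
  | succ j ih =>
    rcases Nat.lt_or_ge i (j + 1) with h' | h'
    · exact (ih (by omega)).trans (occs_subset_succ p j)
    · have : i = j + 1 := by omega
      rw [this]

lemma exists_empty [NeZero m] (p : ℕ → ZMod m) {i : ℕ} (hi : i < m) :
    ∃ t : ℕ, t < m ∧ p i + (t : ZMod m) ∉ occs p i := by
  have hne : occs p i ≠ Finset.univ := by
    intro h
    have h1 := occs_card p i
    rw [h, Finset.card_univ, ZMod.card] at h1
    omega
  obtain ⟨x, hx⟩ : ∃ x, x ∉ occs p i := by
    by_contra hc
    push_neg at hc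
    exact hne (Finset.eq_univ_iff_forall.mpr hc)
  refine ⟨(x - p i).val, ZMod.val_lt _, ?_⟩
  rwa [ZMod.natCast_val, ZMod.cast_id', id_eq, add_sub_cancel]

lemma exists_empty' [NeZero m] (p : ℕ → ZMod m) {i : ℕ} (hi : i < m) :
    ∃ t : ℕ, p i + (t : ZMod m) ∉ occs p i := by
  obtain ⟨t, -, ht⟩ := exists_empty p hi
  exact ⟨t, ht⟩

lemma offs_spec (h : ∃ t : ℕ, p i + (t : ZMod m) ∉ occs p i) :
    p i + ((offs p i : ℕ) : ZMod m) ∉ occs p i ∧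
      ∀ t < offs p i, p i + (t : ZMod m) ∈ occs p i := by
  unfold offs
  split_ifs
  exact ⟨Nat.find_spec h, fun t ht => not_not.mp (Nat.find_min h ht)⟩

lemma spot_eq (h : ∃ t : ℕ, p i + (t : ZMod m) ∉ occs p i) :
    spot (occs p i) (p i) = p i + ((offs p i : ℕ) : ZMod m) := by
  unfold spot offs
  split_ifs
  rfl

lemma offs_lt [NeZero m] (p : ℕ → ZMod m) {i : ℕ} (hi : i < m) : offs p i < m := by
  obtain ⟨t, htm, ht⟩ := exists_empty p hi
  have : offs p i ≤ t := by
    unfold offs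
    split_ifs with h'
    · exact Nat.find_min' h' ht
    · exact absurd ⟨t, ht⟩ h'

  omega

lemma mem_occs {x : ZMod m} {i : ℕ} :
    x ∈ occs p i ↔ ∃ j < i, spot (occs p j) (p j) = x := by
  induction i with
  | zero => simp [occs]
  | succ i ih =>
    show x ∈ insert _ _ ↔ _
    rw [Finset.mem_insert, ih]
    constructor
    · rintro (rfl | ⟨j, hj, hx⟩)
      exacts [⟨i, by omega, rfl⟩, ⟨j, by omega, hx⟩]
    · rintro ⟨j, hj, hx⟩
      rcases Nat.lt_or_ge j i with h' | h'
      · exact Or.inr ⟨j, h', hx⟩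
      · have : j = i := by omega
        subst this
        exact Or.inl hx.symm

lemma cast_eq_cast_small [NeZero m] {a b : ℕ} (hab : a ≤ b) (hb : b < m)
    (h : (a : ZMod m) = (b : ZMod m)) : a = b := by
  have h0 : ((b - a : ℕ) : ZMod m) = 0 := by
    push_cast [hab]
    rw [← h]
    ring
  have := (ZMod.natCast_eq_zero_iff _ _).mp h0
  rcases this with ⟨c, hc⟩
  rcases Nat.eq_zero_or_pos c with rfl | hcp
  · omega
  · have : m ≤ b - a := hc ▸ Nat.le_mul_of_pos_right m hcp
    omega

end Aux

/-- Cyclic recursion for the visit counts: `H_{k+1} = Y_{k+1} + (H_k − 1)₊`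
for `k ∈ {1, …, m}`, the case `k = m` reading `H₁ = Y₁ + (H_m − 1)₊`.
(In `ℕ`, truncated subtraction `H k - 1` is exactly `(H k − 1)₊`.) -/
theorem H_cyclic_recursion
    (m n : ℕ) (h1 : 1 ≤ n) (h2 : n < m) (p : ℕ → ZMod m)
    (k : ℕ) (hk : k ∈ Finset.Icc 1 m) :
    H n p (((k + 1 : ℕ)) : ZMod m) = Y n p ((k : ℤ) + 1) + (H n p ((k : ℕ) : ZMod m) - 1) := by
  haveI : NeZero m := ⟨by omega⟩
  set y : ZMod m := ((k : ℕ) : ZMod m) with hy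
  have hcast1 : (((k + 1 : ℕ)) : ZMod m) = y + 1 := by push_cast [hy]; ring
  have hEx : ∀ i < n, ∃ t : ℕ, p i + (t : ZMod m) ∉ occs p i := fun i hi =>
    exists_empty' p (hi.trans h2)
  have hoffs_lt : ∀ i < n, offs p i < m := fun i hi => offs_lt p (hi.trans h2)
  -- the three predicates
  set P : ℕ → Prop := fun i => p i = y + 1 with hP
  set Aq : ℕ → Prop := fun i => ∃ t, t < offs p i ∧ p i + (t : ZMod m) = y with hA
  set Bq : ℕ → Prop := fun i => p i + ((offs p i : ℕ) : ZMod m) = y with hB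
  -- P and Aq are incompatible
  have keyPA : ∀ i < n, ¬ (P i ∧ Aq i) := by
    rintro i hi ⟨hp, t, ht, hpt⟩
    have h0 : ((0 : ℕ) : ZMod m) = ((t + 1 : ℕ) : ZMod m) := by
      push_cast
      linear_combination hp - hpt
    have := cast_eq_cast_small (by omega) (by have := hoffs_lt i hi; omega) h0
    omega
  -- Aq and Bq are incompatible
  have keyAB : ∀ i < n, ¬ (Aq i ∧ Bq i) := by
    rintro i hi ⟨⟨t, ht, hpt⟩, hb⟩
    have h0 : ((t : ℕ) : ZMod m) = ((offs p i : ℕ) : ZMod m) := by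
      linear_combination hpt - hb
    have := cast_eq_cast_small (le_of_lt ht) (hoffs_lt i hi) h0
    omega
  -- counting the cars trying y+1
  have e1 : H n p (y + 1) =
      ((Finset.range n).filter P).card + ((Finset.range n).filter Aq).card := by
    have hdisj : Disjoint ((Finset.range n).filter P) ((Finset.range n).filter Aq) := by
      rw [Finset.disjoint_left]
      intro i hiP hiA
      simp only [Finset.mem_filter, Finset.mem_range] at hiP hiA
      exact keyPA i hiP.1 ⟨hiP.2, hiA.2⟩
    rw [← Finset.card_union_of_disjoint hdisj, ← Finset.filter_or]
    unfold H
    refine congrArg Finset.card (Finset.filter_congr ?_)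
    intro i hi
    rw [Finset.mem_range] at hi
    constructor
    · rintro ⟨t, ht, hpt⟩
      match t with
      | 0 =>
        left
        simpa using hpt
      | s + 1 =>
        right
        refine ⟨s, by omega, ?_⟩
        push_cast at hpt
        linear_combination hpt
    · rintro (hp | ⟨t, ht, hpt⟩)
      · exact ⟨0, by omega, by simpa using hp⟩
      · refine ⟨t + 1, by omega, ?_⟩
        push_cast
        linear_combination hpt
  -- counting the cars trying y
  have e2 : H n p y =
      ((Finset.range n).filter Aq).card + ((Finset.range n).filter Bq).card := by
    have hdisj : Disjoint ((Finset.range n).filter Aq) ((Finset.range n).filter Bq) := by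
      rw [Finset.disjoint_left]
      intro i hiA hiB
      simp only [Finset.mem_filter, Finset.mem_range] at hiA hiB
      exact keyAB i hiA.1 ⟨hiA.2, hiB.2⟩
    rw [← Finset.card_union_of_disjoint hdisj, ← Finset.filter_or]
    unfold H
    refine congrArg Finset.card (Finset.filter_congr ?_)
    intro i hi
    rw [Finset.mem_range] at hi
    constructor
    · rintro ⟨t, ht, hpt⟩
      rcases eq_or_lt_of_le ht with rfl | ht'
      · exact Or.inr hpt
      · exact Or.inl ⟨t, ht', hpt⟩
    · rintro (⟨t, ht, hpt⟩ | hb)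
      · exact ⟨t, le_of_lt ht, hpt⟩
      · exact ⟨offs p i, le_refl _, hb⟩
  -- the Y term
  have eY : Y n p ((k : ℤ) + 1) = ((Finset.range n).filter P).card := by
    unfold Y
    have : ((((k : ℤ) + 1 : ℤ)) : ZMod m) = y + 1 := by push_cast [hy]; ring
    simp only [this, hP]
  -- at most one car parks at y
  have hBaux : ∀ i j, i < j → j < n → Bq i → Bq j → False := by
    intro i j hij hj hBi hBj
    have h1 : p i + ((offs p i : ℕ) : ZMod m) ∈ occs p j := by
      have hm1 : spot (occs p i) (p i) ∈ occs p (i + 1) := Finset.mem_insert_self _ _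
      have h2 := occs_mono p (show i + 1 ≤ j by omega) hm1
      rwa [spot_eq (hEx i (by omega))] at h2
    have h3 := (offs_spec (hEx j hj)).1
    rw [hBj] at h3
    rw [hBi] at h1
    exact h3 h1
  have e3 : ((Finset.range n).filter Bq).card ≤ 1 := by
    refine Finset.card_le_one.mpr ?_
    intro i hi j hj
    simp only [Finset.mem_filter, Finset.mem_range] at hi hj
    by_contra hne
    rcases Nat.lt_or_ge i j with h' | h'
    · exact hBaux i j h' hj.1 hi.2 hj.2
    · exact hBaux j i (by omega) hi.1 hj.2 hi.2
  -- if some car tries y, some car parks at y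
  have e4 : H n p y ≠ 0 → ((Finset.range n).filter Bq).card ≠ 0 := by
    intro hne
    have hT : (((Finset.range n).filter
        (fun i => ∃ t, t ≤ offs p i ∧ p i + (t : ZMod m) = y))).Nonempty := by
      rw [← Finset.card_pos]
      unfold H at hne
      omega
    obtain ⟨i, hiT, hmin⟩ := Finset.exists_min_image _ id hT
    simp only [Finset.mem_filter, Finset.mem_range] at hiT
    obtain ⟨hin, t, ht, hpt⟩ := hiT
    rcases eq_or_lt_of_le ht with rfl | ht'
    · exact Finset.card_ne_zero_of_mem
        (Finset.mem_filter.mpr ⟨Finset.mem_range.mpr hin, hpt⟩)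
    · exfalso
      have hy_occ : y ∈ occs p i := by
        have := (offs_spec (hEx i hin)).2 t ht'
        rwa [hpt] at this
      obtain ⟨j, hji, hjs⟩ := mem_occs.mp hy_occ
      have hjn : j < n := by omega
      rw [spot_eq (hEx j hjn)] at hjs
      have hjT : j ∈ (Finset.range n).filter
          (fun i => ∃ t, t ≤ offs p i ∧ p i + (t : ZMod m) = y) :=
        Finset.mem_filter.mpr ⟨Finset.mem_range.mpr hjn, offs p j, le_refl _, hjs⟩
      have := hmin j hjT
      simp only [id_eq] at this
      omega
  rw [hcast1, eY, e1, e2]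
  have := e4
  rw [e2] at this
  omega
end Parking
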